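/- Covariance of the real ADM metric under foliation-changing diffeomorphisms (Eqs. (2.7)–(2.8), matrix form): let ε ∈ {−1,+1}, let (N, n, ĝ) be real ADM data, let J be a Jacobian, and assume D_ε² ≠ 0, so the transf_ε-primed triple (N'², n', ĝ') is defined. Then Jᵀ · A(ε, N'², n', ĝ') · J = A(ε, N², n, ĝ), an equality of real (d+1)×(d+1) matrices; i.e., the primed ADM triple represents the same bilinear form in the new foliation as the original triple in the old one. -/
import Mathlib


open Matrix Complex BigOperators

noncomputable section

/-- The ADM matrix `A(ε, λ, n, ĝ)` representing the line element
`ε λ dt² + ĝ_{ab}(dx^a + n^a dt)(dx^b + n^b dt)`. -/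
def ADM {R : Type*} [CommRing R] {d : ℕ} (ε lam : R) (n : Fin d → R)
    (g : Matrix (Fin d) (Fin d) R) : Matrix (Fin (d+1)) (Fin (d+1)) R :=
  Matrix.of fun i j =>
    Fin.cases
      (Fin.cases (ε * lam + ∑ a, ∑ b, g a b * n a * n b)
        (fun a => ∑ b, g a b * n b) j)
      (fun a => Fin.cases (∑ b, g a b * n b) (fun b => g a b) j) i

variable {d : ℕ}

/-- Block `τ = ∂t'/∂t` of a Jacobian. -/
def tauJ (J : Matrix (Fin (d+1)) (Fin (d+1)) ℝ) : ℝ := J 0 0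

/-- Block `σ_c = ∂t'/∂x^c` of a Jacobian. -/
def sigJ (J : Matrix (Fin (d+1)) (Fin (d+1)) ℝ) : Fin d → ℝ := fun c => J 0 c.succ

/-- Block `ρ^a = ∂x'^a/∂t` of a Jacobian. -/
def rhoJ (J : Matrix (Fin (d+1)) (Fin (d+1)) ℝ) : Fin d → ℝ := fun a => J a.succ 0

/-- Block `X^a_c = ∂x'^a/∂x^c` of a Jacobian. -/
def XJ (J : Matrix (Fin (d+1)) (Fin (d+1)) ℝ) : Matrix (Fin d) (Fin d) ℝ :=
  Matrix.of fun a c => J a.succ c.succ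

/-- Block `k_a = (J⁻¹)₀ₐ` of the inverse Jacobian. -/
def kJ (J : Matrix (Fin (d+1)) (Fin (d+1)) ℝ) : Fin d → ℝ := fun a => J⁻¹ 0 a.succ

/-- Block `K^c_a = (J⁻¹)_{ca}` of the inverse Jacobian. -/
def KJ (J : Matrix (Fin (d+1)) (Fin (d+1)) ℝ) : Matrix (Fin d) (Fin d) ℝ :=
  Matrix.of fun c a => J⁻¹ c.succ a.succ

/-- `C = τ - Σ_c σ_c n^c`. -/
def CJ (J : Matrix (Fin (d+1)) (Fin (d+1)) ℝ) (n : Fin d → ℝ) : ℝ :=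
  tauJ J - ∑ c, sigJ J c * n c

/-- `σᵀ ĝ⁻¹ σ`. -/
def sgsJ (J : Matrix (Fin (d+1)) (Fin (d+1)) ℝ) (g : Matrix (Fin d) (Fin d) ℝ) : ℝ :=
  ∑ c, ∑ e, sigJ J c * g⁻¹ c e * sigJ J e

/-- `(X ĝ⁻¹ σ)^a`. -/
def Xgs (J : Matrix (Fin (d+1)) (Fin (d+1)) ℝ) (g : Matrix (Fin d) (Fin d) ℝ) :
    Fin d → ℝ := fun a => ∑ c, ∑ e, XJ J a c * g⁻¹ c e * sigJ J e

/-- `(ρ - X n)^a`. -/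
def rXn (J : Matrix (Fin (d+1)) (Fin (d+1)) ℝ) (n : Fin d → ℝ) : Fin d → ℝ :=
  fun a => rhoJ J a - ∑ c, XJ J a c * n c

/-- `D_ε² = C² + ε N² σᵀĝ⁻¹σ`. -/
def Deps2 (J : Matrix (Fin (d+1)) (Fin (d+1)) ℝ) (ε N : ℝ) (n : Fin d → ℝ)
    (g : Matrix (Fin d) (Fin d) ℝ) : ℝ :=
  (CJ J n)^2 + ε * N^2 * sgsJ J g

/-- transf_ε primed squared lapse `N'² = N²/D_ε²`. -/
def NP2 (J : Matrix (Fin (d+1)) (Fin (d+1)) ℝ) (ε N : ℝ) (n : Fin d → ℝ)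
    (g : Matrix (Fin d) (Fin d) ℝ) : ℝ := N^2 / Deps2 J ε N n g

/-- transf_ε primed shift `n'^a`. -/
def shiftP (J : Matrix (Fin (d+1)) (Fin (d+1)) ℝ) (ε N : ℝ) (n : Fin d → ℝ)
    (g : Matrix (Fin d) (Fin d) ℝ) : Fin d → ℝ := fun a =>
  -((rXn J n a) * CJ J n + ε * N^2 * Xgs J g a) / Deps2 J ε N n g

/-- transf_ε primed spatial metric `ĝ'_{ab}`. -/
def ghP (J : Matrix (Fin (d+1)) (Fin (d+1)) ℝ) (ε N : ℝ) (n : Fin d → ℝ)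
    (g : Matrix (Fin d) (Fin d) ℝ) : Matrix (Fin d) (Fin d) ℝ :=
  Matrix.of fun a b =>
    (∑ c, ∑ e, (KJ J c a + kJ J a * n c) * (KJ J e b + kJ J b * n e) * g c e)
    + ε * N^2 * kJ J a * kJ J b

/-- The Wick phase `e^{-2iθ}`. -/
def wick (θ : ℝ) : ℂ := Complex.exp (-2 * Complex.I * θ)

/-- `D_θ² = C² - e^{-2iθ} N² σᵀĝ⁻¹σ`. -/
def Dth2 (J : Matrix (Fin (d+1)) (Fin (d+1)) ℝ) (θ N : ℝ) (n : Fin d → ℝ)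
    (g : Matrix (Fin d) (Fin d) ℝ) : ℂ :=
  (CJ J n : ℂ)^2 - wick θ * (N:ℂ)^2 * (sgsJ J g : ℂ)

/-- lapse-Wick-rotated primed squared lapse `λ'_θ = e^{-2iθ}N²/D_θ²`. -/
def lamW (J : Matrix (Fin (d+1)) (Fin (d+1)) ℝ) (θ N : ℝ) (n : Fin d → ℝ)
    (g : Matrix (Fin d) (Fin d) ℝ) : ℂ :=
  wick θ * (N:ℂ)^2 / Dth2 J θ N n g

/-- lapse-Wick-rotated primed shift `n'_θ{}^a`. -/
def shiftW (J : Matrix (Fin (d+1)) (Fin (d+1)) ℝ) (θ N : ℝ) (n : Fin d → ℝ)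
    (g : Matrix (Fin d) (Fin d) ℝ) : Fin d → ℂ := fun a =>
  -((rXn J n a : ℂ) * (CJ J n : ℂ) - wick θ * (N:ℂ)^2 * (Xgs J g a : ℂ)) / Dth2 J θ N n g

/-- lapse-Wick-rotated primed spatial metric `(ĝ'^θ)_{ab}`. -/
def ghW (J : Matrix (Fin (d+1)) (Fin (d+1)) ℝ) (θ N : ℝ) (n : Fin d → ℝ)
    (g : Matrix (Fin d) (Fin d) ℝ) : Matrix (Fin d) (Fin d) ℂ :=
  Matrix.of fun a b =>
    ((∑ c, ∑ e, (KJ J c a + kJ J a * n c) * (KJ J e b + kJ J b * n e) * g c e : ℝ) : ℂ)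
    - wick θ * (N:ℂ)^2 * (kJ J a : ℂ) * (kJ J b : ℂ)


/-! ### Auxiliary machinery for the covariance proof -/

namespace ADMaux

lemma vecMulVec_mulVec' {d : ℕ} (u w x : Fin d → ℝ) :
    vecMulVec u w *ᵥ x = (w ⬝ᵥ x) • u := by
  funext i
  simp only [Matrix.vecMulVec_apply, Matrix.mulVec, dotProduct, Pi.smul_apply,
    smul_eq_mul]
  rw [Finset.sum_mul]
  exact Finset.sum_congr rfl fun j _ => by ring

lemma vecMul_vecMulVec' {d : ℕ} (x u w : Fin d → ℝ) :
    x ᵥ* vecMulVec u w = (x ⬝ᵥ u) • w := by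
  funext j
  simp only [Matrix.vecMulVec_apply, Matrix.vecMul, dotProduct, Pi.smul_apply,
    smul_eq_mul]
  rw [Finset.sum_mul]
  exact Finset.sum_congr rfl fun i _ => by ring

lemma vecMulVec_mul' {d : ℕ} (u w : Fin d → ℝ) (A : Matrix (Fin d) (Fin d) ℝ) :
    vecMulVec u w * A = vecMulVec u (w ᵥ* A) := by
  ext i j
  simp only [Matrix.vecMulVec_apply, Matrix.mul_apply, Matrix.vecMul, dotProduct,
    Finset.mul_sum]
  exact Finset.sum_congr rfl fun c _ => by ring

/-- Core computation: entries of `Kᵀ * ADM ε lam n g * K`. -/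
lemma KAK {d : ℕ} (ε lam : ℝ) (n : Fin d → ℝ) (g : Matrix (Fin d) (Fin d) ℝ)
    (hgs : g.IsSymm) (K : Matrix (Fin (d+1)) (Fin (d+1)) ℝ) (i j : Fin (d+1)) :
    (Kᵀ * ADM ε lam n g * K) i j
      = ε * lam * K 0 i * K 0 j
        + ∑ c, ∑ e, g c e * (K c.succ i + n c * K 0 i) * (K e.succ j + n e * K 0 j) := by
  have hsym : ∀ a b, g a b = g b a := fun a b => (Matrix.IsSymm.apply hgs b a)
  simp only [Matrix.mul_apply, Matrix.transpose_apply, ADM, Matrix.of_apply,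
    Fin.sum_univ_succ, Fin.cases_zero, Fin.cases_succ]
  have e1 : (K 0 i * K 0 j) * (∑ a, ∑ b, g a b * n a * n b)
      = ∑ c, ∑ e, g c e * (n c * K 0 i) * (n e * K 0 j) := by
    rw [Finset.mul_sum]
    refine Finset.sum_congr rfl fun c _ => ?_
    rw [Finset.mul_sum]
    exact Finset.sum_congr rfl fun e _ => by ring
  have e2 : K 0 j * (∑ p, K p.succ i * (∑ b, g p b * n b))
      = ∑ c, ∑ e, g c e * K c.succ i * (n e * K 0 j) := by
    rw [Finset.mul_sum]
    refine Finset.sum_congr rfl fun c _ => ?_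
    rw [Finset.mul_sum, Finset.mul_sum]
    exact Finset.sum_congr rfl fun e _ => by ring
  have e3 : (∑ q, (K 0 i * ∑ b, g q b * n b) * K q.succ j)
      = ∑ c, ∑ e, g c e * (n c * K 0 i) * K e.succ j := by
    conv_rhs => rw [Finset.sum_comm]
    refine Finset.sum_congr rfl fun q _ => ?_
    rw [Finset.mul_sum, Finset.sum_mul]
    exact Finset.sum_congr rfl fun b _ => by rw [hsym q b]; ring
  have e4 : (∑ q, (∑ p, K p.succ i * g p q) * K q.succ j)
      = ∑ c, ∑ e, g c e * K c.succ i * K e.succ j := by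
    conv_rhs => rw [Finset.sum_comm]
    refine Finset.sum_congr rfl fun q _ => ?_
    rw [Finset.sum_mul]
    exact Finset.sum_congr rfl fun p _ => by ring
  have e5 : ∑ c, ∑ e, g c e * (K c.succ i + n c * K 0 i) * (K e.succ j + n e * K 0 j)
      = (∑ c, ∑ e, g c e * K c.succ i * K e.succ j)
        + (∑ c, ∑ e, g c e * K c.succ i * (n e * K 0 j))
        + (∑ c, ∑ e, g c e * (n c * K 0 i) * K e.succ j)
        + (∑ c, ∑ e, g c e * (n c * K 0 i) * (n e * K 0 j)) := by
    rw [← Finset.sum_add_distrib, ← Finset.sum_add_distrib, ← Finset.sum_add_distrib]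
    refine Finset.sum_congr rfl fun c _ => ?_
    rw [← Finset.sum_add_distrib, ← Finset.sum_add_distrib, ← Finset.sum_add_distrib]
    exact Finset.sum_congr rfl fun e _ => by ring
  have e0 : (∑ q : Fin d, (K 0 i * ∑ b, g q b * n b + ∑ p, K p.succ i * g p q) * K q.succ j)
      = (∑ q : Fin d, (K 0 i * ∑ b, g q b * n b) * K q.succ j)
        + (∑ q : Fin d, (∑ p, K p.succ i * g p q) * K q.succ j) := by
    rw [← Finset.sum_add_distrib]
    exact Finset.sum_congr rfl fun q _ => by ring
  rw [e5]
  linear_combination e0 + e1 + e2 + e3 + e4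

variable {d : ℕ}

/-- `κ = (J⁻¹)₀₀`. -/
def kap (J : Matrix (Fin (d+1)) (Fin (d+1)) ℝ) : ℝ := J⁻¹ 0 0

/-- `m^a = (J⁻¹)ₐ₀`. -/
def mv (J : Matrix (Fin (d+1)) (Fin (d+1)) ℝ) : Fin d → ℝ := fun a => J⁻¹ a.succ 0

/-- `W^c_a = K^c_a + k_a n^c`. -/
def Wm (J : Matrix (Fin (d+1)) (Fin (d+1)) ℝ) (n : Fin d → ℝ) : Matrix (Fin d) (Fin d) ℝ :=
  KJ J + vecMulVec n (kJ J)

/-- `v^c = m^c + κ n^c`. -/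
def vv (J : Matrix (Fin (d+1)) (Fin (d+1)) ℝ) (n : Fin d → ℝ) : Fin d → ℝ :=
  fun c => mv J c + kap J * n c

/-- numerator of the primed shift. -/
def num (J : Matrix (Fin (d+1)) (Fin (d+1)) ℝ) (ε N : ℝ) (n : Fin d → ℝ)
    (g : Matrix (Fin d) (Fin d) ℝ) : Fin d → ℝ :=
  fun a => -(CJ J n * rXn J n a + ε * N^2 * Xgs J g a)

section rels

variable (J : Matrix (Fin (d+1)) (Fin (d+1)) ℝ) (n : Fin d → ℝ)
  (g : Matrix (Fin d) (Fin d) ℝ) (ε N : ℝ)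

lemma hrXn : rXn J n = rhoJ J - XJ J *ᵥ n := rfl

lemma hCJ : CJ J n = tauJ J - sigJ J ⬝ᵥ n := rfl

lemma hsgs : sgsJ J g = sigJ J ⬝ᵥ (g⁻¹ *ᵥ sigJ J) := by
  simp only [sgsJ, dotProduct, Matrix.mulVec, Finset.mul_sum]
  exact Finset.sum_congr rfl fun c _ => Finset.sum_congr rfl fun e _ => by ring

lemma hXgs : Xgs J g = XJ J *ᵥ (g⁻¹ *ᵥ sigJ J) := by
  funext a
  simp only [Xgs, Matrix.mulVec, dotProduct, Finset.mul_sum]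
  exact Finset.sum_congr rfl fun c _ => Finset.sum_congr rfl fun e _ => by ring

set_option linter.unusedSectionVars false

variable (hKJ : J⁻¹ * J = 1) (hJK : J * J⁻¹ = 1)

include hKJ hJK

lemma rel_kr : kJ J ⬝ᵥ rhoJ J = 1 - kap J * tauJ J := by
  have h0 := congrFun (congrFun hKJ 0) 0
  simp only [Matrix.mul_apply, Fin.sum_univ_succ, Matrix.one_apply_eq] at h0
  simp only [dotProduct, kJ, rhoJ, kap, tauJ]
  linarith

lemma rel_kX : kJ J ᵥ* XJ J = -(kap J) • sigJ J := by
  funext c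
  have h0 := congrFun (congrFun hKJ 0) c.succ
  simp only [Matrix.mul_apply, Fin.sum_univ_succ, Matrix.one_apply,
    (Fin.succ_ne_zero c).symm, if_false] at h0
  simp only [Matrix.vecMul, dotProduct, kJ, XJ, sigJ, kap, Matrix.of_apply,
    Pi.smul_apply, Pi.neg_apply, smul_eq_mul, neg_mul]
  linarith

lemma rel_Kr : KJ J *ᵥ rhoJ J = -(tauJ J) • mv J := by
  funext a
  have h0 := congrFun (congrFun hKJ a.succ) 0
  simp only [Matrix.mul_apply, Fin.sum_univ_succ, Matrix.one_apply,
    Fin.succ_ne_zero a, if_false] at h0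
  simp only [Matrix.mulVec, dotProduct, KJ, rhoJ, mv, tauJ, Matrix.of_apply,
    Pi.smul_apply, Pi.neg_apply, smul_eq_mul, neg_mul]
  linarith

lemma rel_KX : KJ J * XJ J = 1 - vecMulVec (mv J) (sigJ J) := by
  ext a c
  have h0 := congrFun (congrFun hKJ a.succ) c.succ
  simp only [Matrix.mul_apply, Fin.sum_univ_succ, Matrix.one_apply, Fin.succ_inj] at h0
  simp only [Matrix.mul_apply, Matrix.sub_apply, Matrix.one_apply, Matrix.vecMulVec_apply,
    KJ, XJ, mv, sigJ, Matrix.of_apply]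
  linarith

lemma rel_sm : sigJ J ⬝ᵥ mv J = 1 - tauJ J * kap J := by
  have h0 := congrFun (congrFun hJK 0) 0
  simp only [Matrix.mul_apply, Fin.sum_univ_succ, Matrix.one_apply_eq] at h0
  simp only [dotProduct, sigJ, mv, tauJ, kap]
  linarith

lemma rel_sK : sigJ J ᵥ* KJ J = -(tauJ J) • kJ J := by
  funext b
  have h0 := congrFun (congrFun hJK 0) b.succ
  simp only [Matrix.mul_apply, Fin.sum_univ_succ, Matrix.one_apply,
    (Fin.succ_ne_zero b).symm, if_false] at h0
  simp only [Matrix.vecMul, dotProduct, sigJ, KJ, kJ, tauJ, Matrix.of_apply,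
    Pi.smul_apply, Pi.neg_apply, smul_eq_mul, neg_mul]
  linarith

lemma rel_Xm : XJ J *ᵥ mv J = -(kap J) • rhoJ J := by
  funext a
  have h0 := congrFun (congrFun hJK a.succ) 0
  simp only [Matrix.mul_apply, Fin.sum_univ_succ, Matrix.one_apply,
    Fin.succ_ne_zero a, if_false] at h0
  simp only [Matrix.mulVec, dotProduct, XJ, mv, rhoJ, kap, Matrix.of_apply,
    Pi.smul_apply, Pi.neg_apply, smul_eq_mul, neg_mul]
  linarith

lemma rel_XK : XJ J * KJ J = 1 - vecMulVec (rhoJ J) (kJ J) := by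
  ext a b
  have h0 := congrFun (congrFun hJK a.succ) b.succ
  simp only [Matrix.mul_apply, Fin.sum_univ_succ, Matrix.one_apply, Fin.succ_inj] at h0
  simp only [Matrix.mul_apply, Matrix.sub_apply, Matrix.one_apply, Matrix.vecMulVec_apply,
    XJ, KJ, rhoJ, kJ, Matrix.of_apply]
  linarith

/-- `σ ⬝ v = 1 - κ C`. -/
lemma d1 : sigJ J ⬝ᵥ vv J n = 1 - kap J * CJ J n := by
  have h1 : sigJ J ⬝ᵥ vv J n = sigJ J ⬝ᵥ mv J + kap J * (sigJ J ⬝ᵥ n) := by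
    simp only [dotProduct, vv, Finset.mul_sum, ← Finset.sum_add_distrib]
    exact Finset.sum_congr rfl fun c _ => by ring
  rw [h1, rel_sm J hKJ hJK, hCJ]
  ring

/-- `σ ᵥ* W = -C • k`. -/
lemma d2 : sigJ J ᵥ* Wm J n = -(CJ J n) • kJ J := by
  rw [Wm, Matrix.vecMul_add, rel_sK J hKJ hJK, vecMul_vecMulVec', hCJ]
  funext b
  simp only [Pi.add_apply, Pi.smul_apply, Pi.neg_apply, smul_eq_mul]
  ring

/-- `k ⬝ (ρ - Xn) = 1 - κ C`. -/
lemma d5 : kJ J ⬝ᵥ rXn J n = 1 - kap J * CJ J n := by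
  rw [hrXn, dotProduct_sub, rel_kr J hKJ hJK, Matrix.dotProduct_mulVec, rel_kX J hKJ hJK, hCJ]
  simp only [smul_dotProduct, smul_eq_mul, neg_mul]
  ring

/-- `W *ᵥ ρ = n - τ • v`. -/
lemma d6 : Wm J n *ᵥ rhoJ J = n - tauJ J • vv J n := by
  rw [Wm, Matrix.add_mulVec, rel_Kr J hKJ hJK, vecMulVec_mulVec', rel_kr J hKJ hJK]
  funext c
  simp only [Pi.add_apply, Pi.sub_apply, Pi.smul_apply, Pi.neg_apply, smul_eq_mul, vv, mv]
  ring

/-- `W * X = 1 - v σᵀ`. -/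
lemma d7 : Wm J n * XJ J = 1 - vecMulVec (vv J n) (sigJ J) := by
  rw [Wm, Matrix.add_mul, rel_KX J hKJ hJK, vecMulVec_mul', rel_kX J hKJ hJK]
  ext a b
  simp only [Matrix.add_apply, Matrix.sub_apply, Matrix.one_apply, Matrix.vecMulVec_apply,
    Pi.smul_apply, Pi.neg_apply, smul_eq_mul, vv]
  ring

/-- `W *ᵥ (ρ - Xn) = -C • v`. -/
lemma d8 : Wm J n *ᵥ rXn J n = -(CJ J n) • vv J n := by
  rw [hrXn, Matrix.mulVec_sub, d6 J n hKJ hJK, Matrix.mulVec_mulVec, d7 J n hKJ hJK,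
    Matrix.sub_mulVec, Matrix.one_mulVec, vecMulVec_mulVec', hCJ]
  funext c
  simp only [Pi.sub_apply, Pi.smul_apply, Pi.neg_apply, smul_eq_mul]
  ring

/-- `W *ᵥ (XG σ) = Gσ - S • v`. -/
lemma d9 : Wm J n *ᵥ Xgs J g = g⁻¹ *ᵥ sigJ J - sgsJ J g • vv J n := by
  rw [hXgs, Matrix.mulVec_mulVec, d7 J n hKJ hJK, Matrix.sub_mulVec, Matrix.one_mulVec,
    vecMulVec_mulVec', hsgs]

/-- `k ⬝ (XG σ) = -κ S`. -/
lemma d10 : kJ J ⬝ᵥ Xgs J g = -(kap J) * sgsJ J g := by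
  rw [hXgs, Matrix.dotProduct_mulVec, rel_kX J hKJ hJK, hsgs]
  simp only [smul_dotProduct, smul_eq_mul, neg_mul]

/-- `W *ᵥ num = D² • v - εN² • Gσ`. -/
lemma d11 : Wm J n *ᵥ num J ε N n g
    = Deps2 J ε N n g • vv J n - (ε * N^2) • (g⁻¹ *ᵥ sigJ J) := by
  have hnum : num J ε N n g = -(CJ J n • rXn J n + (ε * N^2) • Xgs J g) := by
    funext a
    simp only [num, Pi.neg_apply, Pi.add_apply, Pi.smul_apply, smul_eq_mul]
  rw [hnum, Matrix.mulVec_neg, Matrix.mulVec_add, Matrix.mulVec_smul, Matrix.mulVec_smul,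
    d8 J n hKJ hJK, d9 J n g hKJ hJK]
  funext c
  simp only [Pi.neg_apply, Pi.add_apply, Pi.sub_apply, Pi.smul_apply, smul_eq_mul, Deps2]
  ring

/-- `k ⬝ num = κ D² - C`. -/
lemma d12 : kJ J ⬝ᵥ num J ε N n g = kap J * Deps2 J ε N n g - CJ J n := by
  have hnum : num J ε N n g = -(CJ J n • rXn J n + (ε * N^2) • Xgs J g) := by
    funext a
    simp only [num, Pi.neg_apply, Pi.add_apply, Pi.smul_apply, smul_eq_mul]
  rw [hnum, dotProduct_neg, dotProduct_add, dotProduct_smul, dotProduct_smul,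
    d5 J n hKJ hJK, d10 J g hKJ hJK]
  simp only [smul_eq_mul, Deps2]
  ring

/-- `ĝ' = Wᵀ ĝ W + εN² k kᵀ`. -/
lemma hghP : ghP J ε N n g = (Wm J n)ᵀ * g * Wm J n + (ε * N^2) • vecMulVec (kJ J) (kJ J) := by
  ext a b
  simp only [ghP, Matrix.of_apply, Matrix.add_apply, Matrix.smul_apply, smul_eq_mul,
    Matrix.vecMulVec_apply, Matrix.mul_apply, Matrix.transpose_apply]
  have key : (∑ c, ∑ e, (KJ J c a + kJ J a * n c) * (KJ J e b + kJ J b * n e) * g c e)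
      = ∑ e, (∑ c, Wm J n c a * g c e) * Wm J n e b := by
    rw [Finset.sum_comm]
    refine Finset.sum_congr rfl fun e _ => ?_
    rw [Finset.sum_mul]
    refine Finset.sum_congr rfl fun c _ => ?_
    simp only [Wm, Matrix.add_apply, Matrix.vecMulVec_apply]
    ring
  linarith [key]

/-- `ĝ' *ᵥ num = D² • (εN²κ • k + Wᵀ(ĝ v))`. -/
lemma F1 (hgu : g * g⁻¹ = 1) :
    ghP J ε N n g *ᵥ num J ε N n g
      = Deps2 J ε N n g • ((ε * N^2 * kap J) • kJ J + (Wm J n)ᵀ *ᵥ (g *ᵥ vv J n)) := by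
  have h1 : ghP J ε N n g *ᵥ num J ε N n g
      = (Wm J n)ᵀ *ᵥ (g *ᵥ (Wm J n *ᵥ num J ε N n g))
        + (ε * N^2) • ((kJ J ⬝ᵥ num J ε N n g) • kJ J) := by
    rw [hghP J n g ε N hKJ hJK, Matrix.add_mulVec, Matrix.smul_mulVec,
      vecMulVec_mulVec', Matrix.mulVec_mulVec, Matrix.mulVec_mulVec]
  have hWσ : (Wm J n)ᵀ *ᵥ sigJ J = -(CJ J n) • kJ J := by
    rw [Matrix.mulVec_transpose, d2 J n hKJ hJK]
  rw [h1, d11 J n g ε N hKJ hJK, d12 J n g ε N hKJ hJK, Matrix.mulVec_sub,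
    Matrix.mulVec_smul, Matrix.mulVec_smul, Matrix.mulVec_mulVec, hgu, Matrix.one_mulVec,
    Matrix.mulVec_sub, Matrix.mulVec_smul, Matrix.mulVec_smul, hWσ]
  funext b
  simp only [Pi.add_apply, Pi.sub_apply, Pi.smul_apply, Pi.neg_apply, smul_eq_mul]
  ring

/-- `num ⬝ (ĝ' *ᵥ num)` explicitly. -/
lemma F2 (hgu : g * g⁻¹ = 1) (hgs : g.IsSymm) :
    num J ε N n g ⬝ᵥ (ghP J ε N n g *ᵥ num J ε N n g)
      = Deps2 J ε N n g * (Deps2 J ε N n g * (vv J n ⬝ᵥ (g *ᵥ vv J n))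
          + ε * N^2 * kap J ^ 2 * Deps2 J ε N n g - ε * N^2) := by
  have e1 : num J ε N n g ⬝ᵥ kJ J = kap J * Deps2 J ε N n g - CJ J n := by
    rw [dotProduct_comm]; exact d12 J n g ε N hKJ hJK
  have e3 : (g⁻¹ *ᵥ sigJ J) ⬝ᵥ (g *ᵥ vv J n) = sigJ J ⬝ᵥ vv J n := by
    rw [Matrix.dotProduct_mulVec, ← Matrix.mulVec_transpose, hgs.eq,
      Matrix.mulVec_mulVec, hgu, Matrix.one_mulVec]
  have e2 : num J ε N n g ⬝ᵥ ((Wm J n)ᵀ *ᵥ (g *ᵥ vv J n))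
      = Deps2 J ε N n g * (vv J n ⬝ᵥ (g *ᵥ vv J n))
        - ε * N^2 * (1 - kap J * CJ J n) := by
    rw [Matrix.dotProduct_mulVec, Matrix.vecMul_transpose, d11 J n g ε N hKJ hJK,
      sub_dotProduct, smul_dotProduct, smul_dotProduct, e3, d1 J n hKJ hJK]
    simp only [smul_eq_mul]
  rw [F1 J n g ε N hKJ hJK hgu, dotProduct_smul, dotProduct_add, dotProduct_smul, e1, e2]
  simp only [smul_eq_mul]
  ring

end rels

end ADMaux


open ADMaux in
/-- Eqs. (2.7)-(2.8) (matrix form): covariance of the real ADM metric under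
foliation-changing diffeomorphisms. -/
theorem adm_covariance (d : ℕ) (hd : 1 ≤ d) (ε : ℝ) (hε : ε = -1 ∨ ε = 1)
    (N : ℝ) (hN : 0 < N) (n : Fin d → ℝ)
    (g : Matrix (Fin d) (Fin d) ℝ) (hgs : g.IsSymm) (hg : g.PosDef)
    (J : Matrix (Fin (d+1)) (Fin (d+1)) ℝ) (hJ : IsUnit J.det)
    (hD : Deps2 J ε N n g ≠ 0) :
    Jᵀ * ADM ε (NP2 J ε N n g) (shiftP J ε N n g) (ghP J ε N n g) * J
      = ADM ε (N^2) n g := by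
  have hKJ : J⁻¹ * J = 1 := Matrix.nonsing_inv_mul J hJ
  have hJK : J * J⁻¹ = 1 := Matrix.mul_nonsing_inv J hJ
  have hgu : g * g⁻¹ = 1 :=
    Matrix.mul_nonsing_inv g (isUnit_iff_ne_zero.mpr hg.det_pos.ne')
  have hsym : ∀ a b, g a b = g b a := fun a b => (Matrix.IsSymm.apply hgs b a)
  have hshift : shiftP J ε N n g = (Deps2 J ε N n g)⁻¹ • ADMaux.num J ε N n g := by
    funext a
    simp only [shiftP, ADMaux.num, Pi.smul_apply, smul_eq_mul, div_eq_inv_mul]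
    ring
  have hF1 := ADMaux.F1 J n g ε N hKJ hJK hgu
  have hF2 := ADMaux.F2 J n g ε N hKJ hJK hgu hgs
  have hmain : ADM ε (NP2 J ε N n g) (shiftP J ε N n g) (ghP J ε N n g)
      = (J⁻¹)ᵀ * ADM ε (N^2) n g * J⁻¹ := by
    ext i j
    rw [ADMaux.KAK ε (N^2) n g hgs (J⁻¹) i j]
    induction i using Fin.cases with
    | zero =>
      induction j using Fin.cases with
      | zero =>
        simp only [ADM, Matrix.of_apply, Fin.cases_zero]
        have hL : (∑ a, ∑ b, ghP J ε N n g a b * shiftP J ε N n g a * shiftP J ε N n g b)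
            = shiftP J ε N n g ⬝ᵥ (ghP J ε N n g *ᵥ shiftP J ε N n g) := by
          simp only [dotProduct, Matrix.mulVec, Finset.mul_sum]
          exact Finset.sum_congr rfl fun a _ => Finset.sum_congr rfl fun b _ => by ring
        have hR : (∑ c, ∑ e, g c e * (J⁻¹ c.succ 0 + n c * J⁻¹ 0 0)
              * (J⁻¹ e.succ 0 + n e * J⁻¹ 0 0))
            = ADMaux.vv J n ⬝ᵥ (g *ᵥ ADMaux.vv J n) := by
          simp only [dotProduct, Matrix.mulVec, ADMaux.vv, ADMaux.mv, ADMaux.kap,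
            Finset.mul_sum]
          exact Finset.sum_congr rfl fun c _ => Finset.sum_congr rfl fun e _ => by ring
        rw [hL, hshift, Matrix.mulVec_smul, dotProduct_smul, smul_dotProduct,
          hF2, hR]
        simp only [NP2, ADMaux.kap, smul_eq_mul]
        field_simp
        ring
      | succ b =>
        simp only [ADM, Matrix.of_apply, Fin.cases_zero, Fin.cases_succ]
        have hL : (∑ e, ghP J ε N n g b e * shiftP J ε N n g e)
            = (ghP J ε N n g *ᵥ shiftP J ε N n g) b := rfl
        have hR : (∑ c, ∑ e, g c e * (J⁻¹ c.succ 0 + n c * J⁻¹ 0 0)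
              * (J⁻¹ e.succ b.succ + n e * J⁻¹ 0 b.succ))
            = ((ADMaux.Wm J n)ᵀ *ᵥ (g *ᵥ ADMaux.vv J n)) b := by
          rw [Finset.sum_comm]
          simp only [Matrix.mulVec, dotProduct, Matrix.transpose_apply,
            ADMaux.Wm, ADMaux.vv, ADMaux.mv, ADMaux.kap, Matrix.add_apply,
            Matrix.vecMulVec_apply, KJ, kJ, Matrix.of_apply, Finset.mul_sum]
          refine Finset.sum_congr rfl fun e _ => Finset.sum_congr rfl fun c _ => ?_
          rw [hsym c e]
          ring
        rw [hL, hshift, Matrix.mulVec_smul, hF1]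
        simp only [Pi.smul_apply, Pi.add_apply, smul_eq_mul]
        rw [inv_mul_cancel_left₀ hD, ← hR]
        simp only [ADMaux.kap, kJ]
    | succ a =>
      induction j using Fin.cases with
      | zero =>
        simp only [ADM, Matrix.of_apply, Fin.cases_zero, Fin.cases_succ]
        have hL : (∑ e, ghP J ε N n g a e * shiftP J ε N n g e)
            = (ghP J ε N n g *ᵥ shiftP J ε N n g) a := rfl
        have hR : (∑ c, ∑ e, g c e * (J⁻¹ c.succ a.succ + n c * J⁻¹ 0 a.succ)
              * (J⁻¹ e.succ 0 + n e * J⁻¹ 0 0))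
            = ((ADMaux.Wm J n)ᵀ *ᵥ (g *ᵥ ADMaux.vv J n)) a := by
          simp only [Matrix.mulVec, dotProduct, Matrix.transpose_apply,
            ADMaux.Wm, ADMaux.vv, ADMaux.mv, ADMaux.kap, Matrix.add_apply,
            Matrix.vecMulVec_apply, KJ, kJ, Matrix.of_apply, Finset.mul_sum]
          exact Finset.sum_congr rfl fun c _ => Finset.sum_congr rfl fun e _ => by ring
        rw [hL, hshift, Matrix.mulVec_smul, hF1]
        simp only [Pi.smul_apply, Pi.add_apply, smul_eq_mul]
        rw [inv_mul_cancel_left₀ hD, ← hR]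
        simp only [ADMaux.kap, kJ]
        ring
      | succ b =>
        simp only [ADM, Matrix.of_apply, Fin.cases_succ, ghP, KJ, kJ]
        have key : (∑ c, ∑ e, (J⁻¹ c.succ a.succ + J⁻¹ 0 a.succ * n c)
              * (J⁻¹ e.succ b.succ + J⁻¹ 0 b.succ * n e) * g c e)
            = ∑ c, ∑ e, g c e * (J⁻¹ c.succ a.succ + n c * J⁻¹ 0 a.succ)
              * (J⁻¹ e.succ b.succ + n e * J⁻¹ 0 b.succ) := by
          exact Finset.sum_congr rfl fun c _ => Finset.sum_congr rfl fun e _ => by ring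
        linear_combination key
  rw [hmain]
  have hassoc : Jᵀ * ((J⁻¹)ᵀ * ADM ε (N ^ 2) n g * J⁻¹) * J
      = (J⁻¹ * J)ᵀ * (ADM ε (N ^ 2) n g * (J⁻¹ * J)) := by
    rw [Matrix.transpose_mul]
    simp only [Matrix.mul_assoc]
  rw [hassoc, hKJ]
  simp
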